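/- Let T be a star with center u and n leaves, and let r be a leaf of T. Then π_t(T, r) = (n+1) + 4t − 3, i.e., every configuration of size n + 4t − 2 on T is t-fold r-solvable, and some configuration of size n + 4t − 3 is not. -/

import Mathlib

open SimpleGraph

open Classical in
/-- A single pebbling step: remove two pebbles from `u` and add one to an adjacent `v`. -/
def PebStep {V : Type*} (G : SimpleGraph V) (C C' : V → ℕ) : Prop :=
  ∃ u v, G.Adj u v ∧ 2 ≤ C u ∧
    ∀ w, C' w = if w = u then C w - 2 else if w = v then C w + 1 else C w

/-- `C` is `t`-fold `r`-solvable: some sequence of pebbling steps places `t` pebbles on `r`. -/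
def Solvable {V : Type*} (G : SimpleGraph V) (C : V → ℕ) (r : V) (t : ℕ) : Prop :=
  ∃ C', Relation.ReflTransGen (PebStep G) C C' ∧ t ≤ C' r

/-- The size of a configuration: total number of pebbles. -/
def confSize {V : Type*} [Fintype V] (C : V → ℕ) : ℕ := ∑ v, C v

/-- The potential of a configuration: the number of pairwise disjoint pairs of
pebbles sitting on common vertices, `∑ v, ⌊C v / 2⌋`. -/
def potential {V : Type*} [Fintype V] (C : V → ℕ) : ℕ := ∑ v, C v / 2

/-- Number of vertices with no pebbles. -/
noncomputable def numZeros {V : Type*} [Fintype V] (C : V → ℕ) : ℕ :=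
  {v : V | C v = 0}.ncard

/-- The `t`-pebbling number of `G` with root `r`. -/
noncomputable def piT {V : Type*} [Fintype V] (G : SimpleGraph V) (r : V) (t : ℕ) : ℕ :=
  sInf {m | ∀ C : V → ℕ, m ≤ confSize C → Solvable G C r t}

/-- The `t`-pebbling number of `G`. -/
noncomputable def piTG {V : Type*} [Fintype V] (G : SimpleGraph V) (t : ℕ) : ℕ :=
  Finset.univ.sup fun r => piT G r t

/-- `G` is `k`-connected: more than `k` vertices and deleting fewer than `k`
vertices leaves a connected graph. -/
def KConnected {V : Type*} [Fintype V] (G : SimpleGraph V) (k : ℕ) : Prop :=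
  k < Fintype.card V ∧
    ∀ S : Set V, S.ncard < k → ((⊤ : G.Subgraph).deleteVerts S).coe.Connected

/-- `u` is a universal vertex: adjacent to every other vertex. -/
def IsUniversal {V : Type*} (G : SimpleGraph V) (u : V) : Prop :=
  ∀ v, v ≠ u → G.Adj u v

/-- The star with center `0` and `n` leaves. -/
def starGraph (n : ℕ) : SimpleGraph (Fin (n + 1)) :=
  SimpleGraph.fromRel (fun a _ => a = 0)

namespace StarPf

open Finset

variable {n : ℕ}

/-- The non-root leaves of the star. -/
def leafSet (n : ℕ) (r : Fin (n + 1)) : Finset (Fin (n + 1)) :=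
  Finset.univ.filter (fun v => v ≠ 0 ∧ v ≠ r)

/-- The maximal number of pebbles that can be moved to the root `r`. -/
def pot (n : ℕ) (r : Fin (n + 1)) (C : Fin (n + 1) → ℕ) : ℕ :=
  C r + (C 0 + ∑ v ∈ leafSet n r, C v / 2) / 2

lemma mem_leafSet {r w : Fin (n + 1)} : w ∈ leafSet n r ↔ w ≠ 0 ∧ w ≠ r := by
  simp [leafSet]

lemma sum_pair_split (s : Finset (Fin (n + 1))) (f : Fin (n + 1) → ℕ) {a b : Fin (n + 1)}
    (ha : a ∈ s) (hb : b ∈ s) (hab : a ≠ b) :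
    ∑ w ∈ s, f w = f a + f b + ∑ w ∈ (s.erase a).erase b, f w := by
  have h1 : f a + ∑ w ∈ s.erase a, f w = ∑ w ∈ s, f w :=
    Finset.add_sum_erase s f ha
  have h2 : f b + ∑ w ∈ (s.erase a).erase b, f w = ∑ w ∈ s.erase a, f w :=
    Finset.add_sum_erase (s.erase a) f (Finset.mem_erase.mpr ⟨hab.symm, hb⟩)
  omega

lemma confSize_step {C C' : Fin (n + 1) → ℕ} {u v : Fin (n + 1)} (huv : u ≠ v) (h2 : 2 ≤ C u)
    (hC' : ∀ w, C' w = if w = u then C w - 2 else if w = v then C w + 1 else C w) :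
    confSize C' + 1 = confSize C := by
  unfold confSize
  rw [sum_pair_split Finset.univ C' (Finset.mem_univ u) (Finset.mem_univ v) huv,
      sum_pair_split Finset.univ C (Finset.mem_univ u) (Finset.mem_univ v) huv]
  have e1 : C' u = C u - 2 := by rw [hC']; simp
  have e2 : C' v = C v + 1 := by rw [hC']; simp [huv.symm]
  have e3 : ∑ w ∈ (Finset.univ.erase u).erase v, C' w
      = ∑ w ∈ (Finset.univ.erase u).erase v, C w := by
    refine Finset.sum_congr rfl fun w hw => ?_
    rw [Finset.mem_erase, Finset.mem_erase] at hw
    rw [hC']; simp [hw.1, hw.2.1]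
  omega

lemma pot_step_le {r : Fin (n + 1)} (hr : r ≠ 0) {C C' : Fin (n + 1) → ℕ}
    (h : PebStep (_root_.starGraph n) C C') : pot n r C' ≤ pot n r C := by
  obtain ⟨u, v, hadj, h2, hC'⟩ := h
  rw [_root_.starGraph, SimpleGraph.fromRel_adj] at hadj
  obtain ⟨huv, h0⟩ := hadj
  unfold pot
  rcases h0 with hu0 | hv0
  · subst hu0
    have e0 : C' 0 = C 0 - 2 := by rw [hC']; simp
    by_cases hvr : v = r
    · subst hvr
      have er : C' v = C v + 1 := by rw [hC']; simp [huv.symm]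
      have eS : ∑ w ∈ leafSet n v, C' w / 2 = ∑ w ∈ leafSet n v, C w / 2 := by
        refine Finset.sum_congr rfl fun w hw => ?_
        obtain ⟨hw0, hwr⟩ := mem_leafSet.mp hw
        rw [hC']; simp [hw0, hwr]
      rw [er, e0, eS]; omega
    · have er : C' r = C r := by rw [hC']; simp [hr, Ne.symm hvr]
      have hv : v ∈ leafSet n r := mem_leafSet.mpr ⟨Ne.symm huv, hvr⟩
      have hsplit : C' v / 2 + ∑ w ∈ (leafSet n r).erase v, C' w / 2
          = ∑ w ∈ leafSet n r, C' w / 2 :=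
        Finset.add_sum_erase (leafSet n r) (fun w => C' w / 2) hv
      have hsplit2 : C v / 2 + ∑ w ∈ (leafSet n r).erase v, C w / 2
          = ∑ w ∈ leafSet n r, C w / 2 :=
        Finset.add_sum_erase (leafSet n r) (fun w => C w / 2) hv
      have ev : C' v = C v + 1 := by rw [hC']; simp [Ne.symm huv]
      have eR : ∑ w ∈ (leafSet n r).erase v, C' w / 2
          = ∑ w ∈ (leafSet n r).erase v, C w / 2 := by
        refine Finset.sum_congr rfl fun w hw => ?_
        rw [Finset.mem_erase] at hw
        obtain ⟨hw0, hwr⟩ := mem_leafSet.mp hw.2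
        rw [hC']; simp [hw0, hw.1]
      rw [er, e0]; omega
  · subst hv0
    have e0 : C' 0 = C 0 + 1 := by rw [hC']; simp [Ne.symm huv]
    by_cases hur : u = r
    · subst hur
      have er : C' u = C u - 2 := by rw [hC']; simp
      have eS : ∑ w ∈ leafSet n u, C' w / 2 = ∑ w ∈ leafSet n u, C w / 2 := by
        refine Finset.sum_congr rfl fun w hw => ?_
        obtain ⟨hw0, hwr⟩ := mem_leafSet.mp hw
        rw [hC']; simp [hw0, hwr]
      rw [er, e0, eS]; omega
    · have er : C' r = C r := by rw [hC']; simp [hr, Ne.symm hur]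
      have hu : u ∈ leafSet n r := mem_leafSet.mpr ⟨huv, hur⟩
      have hsplit : C' u / 2 + ∑ w ∈ (leafSet n r).erase u, C' w / 2
          = ∑ w ∈ leafSet n r, C' w / 2 :=
        Finset.add_sum_erase (leafSet n r) (fun w => C' w / 2) hu
      have hsplit2 : C u / 2 + ∑ w ∈ (leafSet n r).erase u, C w / 2
          = ∑ w ∈ leafSet n r, C w / 2 :=
        Finset.add_sum_erase (leafSet n r) (fun w => C w / 2) hu
      have eu : C' u = C u - 2 := by rw [hC']; simp
      have eR : ∑ w ∈ (leafSet n r).erase u, C' w / 2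
          = ∑ w ∈ (leafSet n r).erase u, C w / 2 := by
        refine Finset.sum_congr rfl fun w hw => ?_
        rw [Finset.mem_erase] at hw
        obtain ⟨hw0, hwr⟩ := mem_leafSet.mp hw.2
        rw [hC']; simp [hw0, hw.1]
      rw [er, e0]; omega

lemma pot_mono_rtg {r : Fin (n + 1)} (hr : r ≠ 0) {C C' : Fin (n + 1) → ℕ}
    (h : Relation.ReflTransGen (PebStep (_root_.starGraph n)) C C') :
    pot n r C' ≤ pot n r C := by
  induction h with
  | refl => exact le_rfl
  | tail _ hstep ih => exact le_trans (pot_step_le hr hstep) ih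

lemma pot_of_solvable {r : Fin (n + 1)} (hr : r ≠ 0) {C : Fin (n + 1) → ℕ} {t : ℕ}
    (h : Solvable (_root_.starGraph n) C r t) : t ≤ pot n r C := by
  obtain ⟨C', hrtg, hle⟩ := h
  have h1 : pot n r C' ≤ pot n r C := pot_mono_rtg hr hrtg
  have h2 : C' r ≤ pot n r C' := Nat.le_add_right _ _
  omega

lemma adj_zero {v : Fin (n + 1)} (hv : v ≠ 0) : (_root_.starGraph n).Adj 0 v := by
  rw [_root_.starGraph, SimpleGraph.fromRel_adj]
  exact ⟨Ne.symm hv, Or.inl rfl⟩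

lemma adj_zero' {v : Fin (n + 1)} (hv : v ≠ 0) : (_root_.starGraph n).Adj v 0 := by
  rw [_root_.starGraph, SimpleGraph.fromRel_adj]
  exact ⟨hv, Or.inr rfl⟩

lemma solvable_of_pot {r : Fin (n + 1)} (hr : r ≠ 0) :
    ∀ N t (C : Fin (n + 1) → ℕ), confSize C ≤ N → t ≤ pot n r C →
      Solvable (_root_.starGraph n) C r t := by
  intro N
  induction N with
  | zero =>
    intro t C hsz hpot
    have h0 : ∀ v, C v = 0 := by
      intro v
      have hz : confSize C = 0 := Nat.le_zero.mp hsz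
      unfold confSize at hz
      exact Finset.sum_eq_zero_iff.mp hz v (Finset.mem_univ v)
    refine ⟨C, Relation.ReflTransGen.refl, ?_⟩
    have hS : ∑ v ∈ leafSet n r, C v / 2 = 0 :=
      Finset.sum_eq_zero (fun v _ => by simp [h0 v])
    have hp : pot n r C = 0 := by unfold pot; rw [h0 r, h0 0, hS]
    rw [h0 r]; omega
  | succ N ih =>
    intro t C hsz hpot
    by_cases hcr : t ≤ C r
    · exact ⟨C, Relation.ReflTransGen.refl, hcr⟩
    push_neg at hcr
    have hpot' : t ≤ C r + (C 0 + ∑ v ∈ leafSet n r, C v / 2) / 2 := hpot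
    have hin : 2 ≤ C 0 + ∑ v ∈ leafSet n r, C v / 2 := by omega
    by_cases h0 : 2 ≤ C 0
    · -- move a pebble from the center to r
      set C' : Fin (n + 1) → ℕ :=
        fun w => if w = 0 then C w - 2 else if w = r then C w + 1 else C w with hC'
      have hCdef : ∀ w, C' w = if w = 0 then C w - 2 else if w = r then C w + 1 else C w :=
        fun w => rfl
      have hstep : PebStep (_root_.starGraph n) C C' := ⟨0, r, adj_zero hr, h0, fun w => by rw [hCdef w]; congr⟩
      have hsz' : confSize C' ≤ N := by
        have := confSize_step (Ne.symm hr) h0 hCdef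
        omega
      have e0 : C' 0 = C 0 - 2 := by rw [hCdef]; simp
      have er : C' r = C r + 1 := by rw [hCdef]; simp [hr]
      have eS : ∑ v ∈ leafSet n r, C' v / 2 = ∑ v ∈ leafSet n r, C v / 2 := by
        refine Finset.sum_congr rfl fun w hw => ?_
        obtain ⟨hw0, hwr⟩ := mem_leafSet.mp hw
        rw [hCdef]; simp [hw0, hwr]
      have hpotC' : t ≤ pot n r C' := by
        unfold pot; rw [e0, er, eS]; omega
      obtain ⟨C'', hrtg, hle⟩ := ih t C' hsz' hpotC'
      exact ⟨C'', Relation.ReflTransGen.head hstep hrtg, hle⟩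
    · -- find a leaf with two pebbles and move one to the center
      push_neg at h0
      have hex : ∃ v ∈ leafSet n r, 2 ≤ C v := by
        by_contra hcon
        push_neg at hcon
        have : ∑ v ∈ leafSet n r, C v / 2 = 0 :=
          Finset.sum_eq_zero (fun v hv => by have := hcon v hv; omega)
        omega
      obtain ⟨v, hvmem, hv2⟩ := hex
      obtain ⟨hv0, hvr⟩ := mem_leafSet.mp hvmem
      set C' : Fin (n + 1) → ℕ :=
        fun w => if w = v then C w - 2 else if w = 0 then C w + 1 else C w with hC'
      have hCdef : ∀ w, C' w = if w = v then C w - 2 else if w = 0 then C w + 1 else C w :=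
        fun w => rfl
      have hstep : PebStep (_root_.starGraph n) C C' := ⟨v, 0, adj_zero' hv0, hv2, fun w => by rw [hCdef w]; congr⟩
      have hsz' : confSize C' ≤ N := by
        have := confSize_step hv0 hv2 hCdef
        omega
      have e0 : C' 0 = C 0 + 1 := by rw [hCdef]; simp [Ne.symm hv0]
      have er : C' r = C r := by rw [hCdef]; simp [hr, Ne.symm hvr]
      have hsplit : C' v / 2 + ∑ w ∈ (leafSet n r).erase v, C' w / 2
          = ∑ w ∈ leafSet n r, C' w / 2 :=
        Finset.add_sum_erase (leafSet n r) (fun w => C' w / 2) hvmem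
      have hsplit2 : C v / 2 + ∑ w ∈ (leafSet n r).erase v, C w / 2
          = ∑ w ∈ leafSet n r, C w / 2 :=
        Finset.add_sum_erase (leafSet n r) (fun w => C w / 2) hvmem
      have ev : C' v = C v - 2 := by rw [hCdef]; simp
      have eR : ∑ w ∈ (leafSet n r).erase v, C' w / 2
          = ∑ w ∈ (leafSet n r).erase v, C w / 2 := by
        refine Finset.sum_congr rfl fun w hw => ?_
        rw [Finset.mem_erase] at hw
        obtain ⟨hw0, hwr⟩ := mem_leafSet.mp hw.2
        rw [hCdef]; simp [hw0, hw.1]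
      have hpotC' : t ≤ pot n r C' := by
        unfold pot; rw [e0, er]; omega
      obtain ⟨C'', hrtg, hle⟩ := ih t C' hsz' hpotC'
      exact ⟨C'', Relation.ReflTransGen.head hstep hrtg, hle⟩

lemma leafSet_eq {r : Fin (n + 1)} (hr : r ≠ 0) :
    leafSet n r = (Finset.univ.erase r).erase 0 := by
  ext w
  simp only [mem_leafSet, Finset.mem_erase, Finset.mem_univ, and_true]

lemma card_leafSet {r : Fin (n + 1)} (hr : r ≠ 0) : (leafSet n r).card = n - 1 := by
  rw [leafSet_eq hr,
    Finset.card_erase_of_mem (Finset.mem_erase.mpr ⟨Ne.symm hr, Finset.mem_univ 0⟩),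
    Finset.card_erase_of_mem (Finset.mem_univ r), Finset.card_univ, Fintype.card_fin]
  omega

lemma confSize_split {r : Fin (n + 1)} (hr : r ≠ 0) (C : Fin (n + 1) → ℕ) :
    confSize C = C r + C 0 + ∑ w ∈ leafSet n r, C w := by
  unfold confSize
  rw [sum_pair_split Finset.univ C (Finset.mem_univ r) (Finset.mem_univ 0) hr, leafSet_eq hr]

lemma pot_ge (hn : 2 ≤ n) {t : ℕ} (ht : 1 ≤ t) {r : Fin (n + 1)} (hr : r ≠ 0)
    {C : Fin (n + 1) → ℕ} (hsz : n + 4 * t - 2 ≤ confSize C) : t ≤ pot n r C := by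
  have hsplit := confSize_split hr C
  have hcard := card_leafSet (n := n) hr
  have hbound : ∑ w ∈ leafSet n r, C w
      ≤ 2 * (∑ w ∈ leafSet n r, C w / 2) + (n - 1) := by
    calc ∑ w ∈ leafSet n r, C w ≤ ∑ w ∈ leafSet n r, (2 * (C w / 2) + 1) :=
          Finset.sum_le_sum (fun w _ => by omega)
      _ = 2 * (∑ w ∈ leafSet n r, C w / 2) + (n - 1) := by
          rw [Finset.sum_add_distrib, ← Finset.mul_sum, Finset.sum_const, hcard, smul_eq_mul,
            mul_one]
  unfold pot
  omega

end StarPf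

theorem piT_star {n t : ℕ} (hn : 2 ≤ n) (ht : 1 ≤ t)
    (r : Fin (n + 1)) (hr : r ≠ 0) :
    (∀ C : Fin (n + 1) → ℕ, confSize C = n + 4 * t - 2 → Solvable (_root_.starGraph n) C r t) ∧
    (∃ C : Fin (n + 1) → ℕ, confSize C = n + 4 * t - 3 ∧ ¬ Solvable (_root_.starGraph n) C r t) ∧
    piT (_root_.starGraph n) r t = (n + 1) + 4 * t - 3 := by
  classical
  have part1 : ∀ C : Fin (n + 1) → ℕ, n + 4 * t - 2 ≤ confSize C →
      Solvable (_root_.starGraph n) C r t := fun C hC =>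
    StarPf.solvable_of_pot hr (confSize C) t C le_rfl (StarPf.pot_ge hn ht hr hC)
  -- construct the bad configuration
  have exv : ∃ v₀ : Fin (n + 1), v₀ ≠ 0 ∧ v₀ ≠ r := by
    by_cases h : r = ⟨1, by omega⟩
    · exact ⟨⟨2, by omega⟩, by simp [Fin.ext_iff], by simp [h, Fin.ext_iff]⟩
    · exact ⟨⟨1, by omega⟩, by simp [Fin.ext_iff], fun hh => h hh.symm⟩
  obtain ⟨v₀, hv₀0, hv₀r⟩ := exv
  set Cb : Fin (n + 1) → ℕ :=
    fun w => if w = v₀ then 4 * t - 1 else if w = 0 then 0 else if w = r then 0 else 1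
    with hCb
  have hCbr : Cb r = 0 := by simp [hCb, Ne.symm hv₀r, hr]
  have hCb0 : Cb 0 = 0 := by simp [hCb, Ne.symm hv₀0]
  have hCbv : Cb v₀ = 4 * t - 1 := by simp [hCb]
  have hv₀mem : v₀ ∈ StarPf.leafSet n r := StarPf.mem_leafSet.mpr ⟨hv₀0, hv₀r⟩
  have hcard := StarPf.card_leafSet (n := n) hr
  have hcard' : ((StarPf.leafSet n r).erase v₀).card = n - 2 := by
    rw [Finset.card_erase_of_mem hv₀mem, hcard]; omega
  have hrest : ∀ w ∈ (StarPf.leafSet n r).erase v₀, Cb w = 1 := by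
    intro w hw
    rw [Finset.mem_erase] at hw
    obtain ⟨hw0, hwr⟩ := StarPf.mem_leafSet.mp hw.2
    simp [hCb, hw.1, hw0, hwr]
  have hsum1 : ∑ w ∈ (StarPf.leafSet n r).erase v₀, Cb w = n - 2 := by
    rw [Finset.sum_congr rfl hrest, Finset.sum_const, hcard', smul_eq_mul, mul_one]
  have hsplit : Cb v₀ + ∑ w ∈ (StarPf.leafSet n r).erase v₀, Cb w
      = ∑ w ∈ StarPf.leafSet n r, Cb w :=
    Finset.add_sum_erase (StarPf.leafSet n r) Cb hv₀mem
  have hsize : confSize Cb = n + 4 * t - 3 := by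
    rw [StarPf.confSize_split hr Cb, hCbr, hCb0]
    omega
  have hsum2 : ∑ w ∈ (StarPf.leafSet n r).erase v₀, Cb w / 2 = 0 :=
    Finset.sum_eq_zero (fun w hw => by simp [hrest w hw])
  have hsplitH : Cb v₀ / 2 + ∑ w ∈ (StarPf.leafSet n r).erase v₀, Cb w / 2
      = ∑ w ∈ StarPf.leafSet n r, Cb w / 2 :=
    Finset.add_sum_erase (StarPf.leafSet n r) (fun w => Cb w / 2) hv₀mem
  have hpotCb : StarPf.pot n r Cb = t - 1 := by
    unfold StarPf.pot
    rw [hCbr, hCb0]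
    omega
  have hnot : ¬ Solvable (_root_.starGraph n) Cb r t := by
    intro hs
    have := StarPf.pot_of_solvable hr hs
    omega
  refine ⟨fun C hC => part1 C (by omega), ⟨Cb, hsize, hnot⟩, ?_⟩
  -- the pebbling number
  have hmem : (n + 4 * t - 2) ∈
      {m | ∀ C : Fin (n + 1) → ℕ, m ≤ confSize C → Solvable (_root_.starGraph n) C r t} :=
    fun C hC => part1 C hC
  have hlb : ∀ m ∈
      {m | ∀ C : Fin (n + 1) → ℕ, m ≤ confSize C → Solvable (_root_.starGraph n) C r t},
      n + 4 * t - 2 ≤ m := by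
    intro m hm
    by_contra hcon
    push_neg at hcon
    exact hnot (hm Cb (by omega))
  have : piT (_root_.starGraph n) r t = n + 4 * t - 2 := by
    unfold piT
    exact le_antisymm (Nat.sInf_le hmem)
      (hlb _ (Nat.sInf_mem ⟨_, hmem⟩))
  omega
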